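/- Let P and Q be probability measures on a measurable space with P absolutely continuous with respect to Q, and let E be a measurable set. Assume the log-likelihood ratio log(dP/dQ) is integrable on E with respect to P. Then ∫_E log(dP/dQ) dP ≥ P(E)·log(P(E)/Q(E)), where the right-hand side is interpreted as 0 when P(E) = 0. -/

import Mathlib

open MeasureTheory

/-- **Log-likelihood ratio and events** (change-of-measure inequality). If `P ≪ Q` are
probability measures, `E` is a measurable set, and the log-likelihood ratio
`log (dP/dQ)` is `P`-integrable on `E`, then
`∫_E log (dP/dQ) dP ≥ P(E) · log (P(E) / Q(E))`
(the right-hand side being `0` when `P(E) = 0`). -/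
theorem loglikelihood_ratio_event_lower_bound
    {X : Type*} [MeasurableSpace X] (P Q : Measure X)
    [IsProbabilityMeasure P] [IsProbabilityMeasure Q]
    (hac : P ≪ Q) (E : Set X) (hE : MeasurableSet E)
    (hInt : IntegrableOn (llr P Q) E P) :
    (P E).toReal * Real.log ((P E).toReal / (Q E).toReal) ≤ ∫ x in E, llr P Q x ∂P := by
  by_cases hPE : P E = 0
  · simp [hPE, Measure.restrict_eq_zero.mpr hPE]
  -- `P E > 0`, and hence `Q E > 0` by absolute continuity.
  have hQE : Q E ≠ 0 := fun h => hPE (hac h)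
  set pE : ℝ := (P E).toReal with hpE
  set qE : ℝ := (Q E).toReal with hqE
  have hpE_pos : 0 < pE := ENNReal.toReal_pos hPE (measure_ne_top P E)
  have hqE_pos : 0 < qE := ENNReal.toReal_pos hQE (measure_ne_top Q E)
  set μ : Measure X := P.restrict E with hμ
  have hμuniv : μ Set.univ = P E := by simp [hμ, Measure.restrict_apply_univ]
  haveI : NeZero μ := ⟨fun h => hPE (Measure.restrict_eq_zero.mp h)⟩
  haveI : IsFiniteMeasure μ := by
    refine ⟨?_⟩
    rw [hμuniv]
    exact measure_lt_top P E
  set f : X → ℝ := fun x => ((P.rnDeriv Q x).toReal)⁻¹ with hf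
  -- a.e. equality of exp(-llr) and f
  have hae : ∀ᵐ x ∂P, Real.exp (-llr P Q x) = f x := by
    filter_upwards [Measure.rnDeriv_pos hac, hac.ae_le (Measure.rnDeriv_lt_top P Q)]
      with x hx_pos hx_lt
    have hpos : 0 < (P.rnDeriv Q x).toReal := ENNReal.toReal_pos hx_pos.ne' hx_lt.ne
    rw [llr, Real.exp_neg, Real.exp_log hpos]
  have hae' : ∀ᵐ x ∂μ, Real.exp (-llr P Q x) = f x := ae_restrict_of_ae hae
  -- the smul function is bounded by 1 and measurable, hence integrable w.r.t. Q
  have hmeas_rn : Measurable fun x => (P.rnDeriv Q x).toReal :=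
    (Measure.measurable_rnDeriv P Q).ennreal_toReal
  have hmeas_g : Measurable fun x => (P.rnDeriv Q x).toReal • f x := hmeas_rn.mul hmeas_rn.inv
  have hbound : ∀ x, ‖(P.rnDeriv Q x).toReal • f x‖ ≤ 1 := by
    intro x
    simp only [smul_eq_mul, hf, Real.norm_eq_abs]
    rcases eq_or_ne ((P.rnDeriv Q x).toReal) 0 with h | h
    · simp [h]
    · rw [mul_inv_cancel₀ h]; simp
  have hint_g : Integrable (fun x => (P.rnDeriv Q x).toReal • f x) Q :=
    Integrable.mono' (integrable_const 1) hmeas_g.aestronglyMeasurable (ae_of_all _ hbound)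
  -- integrability of f on E w.r.t. P
  have hint_f : IntegrableOn f E P := by
    rw [← integrable_indicator_iff hE, ← integrable_rnDeriv_smul_iff hac]
    refine Integrable.mono' (integrable_const 1) ?_ (ae_of_all _ ?_)
    · exact (hmeas_rn.mul (hmeas_rn.inv.indicator hE)).aestronglyMeasurable
    · intro x
      by_cases hx : x ∈ E
      · simpa [Set.indicator_of_mem hx] using hbound x
      · simp [Set.indicator_of_notMem hx]
  -- ∫_E exp(-llr) dP ≤ qE
  have hIntExp : Integrable (fun x => Real.exp (-llr P Q x)) μ :=
    hint_f.congr (Filter.EventuallyEq.symm hae')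
  have hIexp_le : ∫ x, Real.exp (-llr P Q x) ∂μ ≤ qE := by
    rw [integral_congr_ae hae']
    have h1 : ∫ x in E, f x ∂P = ∫ x in E, (P.rnDeriv Q x).toReal • f x ∂Q :=
      (setIntegral_rnDeriv_smul hac hE).symm
    rw [hμ, h1]
    calc ∫ x in E, (P.rnDeriv Q x).toReal • f x ∂Q
        ≤ ∫ _ in E, (1 : ℝ) ∂Q := by
          refine setIntegral_mono_on hint_g.integrableOn (integrable_const 1) hE ?_
          intro x _
          calc (P.rnDeriv Q x).toReal • f x ≤ ‖(P.rnDeriv Q x).toReal • f x‖ := le_abs_self _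
          _ ≤ 1 := hbound x
      _ = qE := by simp [hqE, Measure.real]
  -- Jensen's inequality for exp
  have hjensen : Real.exp (⨍ x, (fun y => -llr P Q y) x ∂μ) ≤ ⨍ x, Real.exp (-llr P Q x) ∂μ := by
    refine ConvexOn.map_average_le convexOn_exp Real.continuous_exp.continuousOn
      isClosed_univ (ae_of_all _ fun _ => Set.mem_univ _) hInt.neg ?_
    exact hIntExp
  -- rewrite averages
  have havg1 : ⨍ x, (fun y => -llr P Q y) x ∂μ = -(pE⁻¹ * ∫ x in E, llr P Q x ∂P) := by
    rw [average_eq, Measure.real, hμuniv, integral_neg]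
    simp [hμ, hpE, smul_eq_mul]
  have havg2 : ⨍ x, Real.exp (-llr P Q x) ∂μ ≤ pE⁻¹ * qE := by
    rw [average_eq, Measure.real, hμuniv, smul_eq_mul]
    exact mul_le_mul_of_nonneg_left hIexp_le (inv_pos.mpr hpE_pos).le
  have hkey : Real.exp (-(pE⁻¹ * ∫ x in E, llr P Q x ∂P)) ≤ pE⁻¹ * qE := by
    rw [← havg1]; exact hjensen.trans havg2
  -- take logs
  have hlog : -(pE⁻¹ * ∫ x in E, llr P Q x ∂P) ≤ Real.log (pE⁻¹ * qE) :=
    (Real.le_log_iff_exp_le (by positivity)).mpr hkey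
  have hlogeq : Real.log (pE⁻¹ * qE) = -Real.log (pE / qE) := by
    rw [Real.log_mul (by positivity) hqE_pos.ne', Real.log_inv,
      Real.log_div hpE_pos.ne' hqE_pos.ne']
    ring
  rw [hlogeq] at hlog
  have h2 : Real.log (pE / qE) ≤ pE⁻¹ * ∫ x in E, llr P Q x ∂P := by linarith
  show pE * Real.log (pE / qE) ≤ ∫ x in E, llr P Q x ∂P
  calc pE * Real.log (pE / qE) ≤ pE * (pE⁻¹ * ∫ x in E, llr P Q x ∂P) :=
        mul_le_mul_of_nonneg_left h2 hpE_pos.le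
    _ = ∫ x in E, llr P Q x ∂P := by field_simp
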